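/- Let x : ℝ → ℝ^n be a continuous curve, W : ℝ^n → ℝ, N1, N2 : ℝ^n → ℝ continuous nonnegative functions, γ > 0, and let E := { y ∈ ℝ^n : N1(y) = 0 and N2(y) = 0 } be nonempty. Suppose for every t ≥ 0 the map t ↦ W(x(t)) is differentiable with (d/dt)W(x(t)) ≤ -γ·(N1(x(t)) + N2(x(t))), W(x(t)) ≥ 0 for all t ≥ 0, and there exist T_U ≥ 0 and c > 0 such that N1(x(t)) + N2(x(t)) ≥ c·dist(x(t), E)² for all t ≥ T_U. Suppose moreover there exists t1 ≥ 0 such that t ↦ dist(x(t), E) is nonincreasing on [t1, ∞). Let W∞ := lim_{t→∞} W(x(t)) and K := sqrt((W(x(0)) - W∞)/(γ·c)). Then for every t ≥ max(2·T_U, 2·t1) with t > 0, one has dist(x(t), E) ≤ (√2·K)/√t. -/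

import Mathlib

open Filter MeasureTheory

theorem stmt_10 {n : ℕ} (x : ℝ → EuclideanSpace ℝ (Fin n)) (hx : Continuous x)
    (W N1 N2 : EuclideanSpace ℝ (Fin n) → ℝ)
    (hN1c : Continuous N1) (hN2c : Continuous N2)
    (hN1 : ∀ y, 0 ≤ N1 y) (hN2 : ∀ y, 0 ≤ N2 y)
    (γ : ℝ) (hγ : 0 < γ)
    (E : Set (EuclideanSpace ℝ (Fin n)))
    (hE : E = {y | N1 y = 0 ∧ N2 y = 0})
    (hEne : E.Nonempty)
    (w' : ℝ → ℝ)
    (hd : ∀ t, 0 ≤ t → HasDerivAt (fun s => W (x s)) (w' t) t)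
    (hineq : ∀ t, 0 ≤ t → w' t ≤ -γ * (N1 (x t) + N2 (x t)))
    (hWnn : ∀ t, 0 ≤ t → 0 ≤ W (x t))
    (TU : ℝ) (hTU : 0 ≤ TU) (c : ℝ) (hc : 0 < c)
    (heb : ∀ t, TU ≤ t → c * Metric.infDist (x t) E ^ 2 ≤ N1 (x t) + N2 (x t))
    (t1 : ℝ) (ht1 : 0 ≤ t1)
    (hmono : ∀ s t : ℝ, t1 ≤ s → s ≤ t → Metric.infDist (x t) E ≤ Metric.infDist (x s) E)
    (Winf : ℝ)
    (hWinf : Tendsto (fun t => W (x t)) atTop (nhds Winf))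
    (K : ℝ) (hK : K = Real.sqrt ((W (x 0) - Winf) / (γ * c))) :
    ∀ t : ℝ, max (2 * TU) (2 * t1) ≤ t → 0 < t →
      Metric.infDist (x t) E ≤ Real.sqrt 2 * K / Real.sqrt t := by
  intro t ht htpos
  have hTUle : 2 * TU ≤ t := le_trans (le_max_left _ _) ht
  have ht1le : 2 * t1 ≤ t := le_trans (le_max_right _ _) ht
  have hhalf0 : (0:ℝ) ≤ t / 2 := by linarith
  have hhalfTU : TU ≤ t / 2 := by linarith
  have hhalft1 : t1 ≤ t / 2 := by linarith
  have hhalft : t / 2 ≤ t := by linarith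
  set D := Metric.infDist (x t) E with hDdef
  have hD0 : 0 ≤ D := Metric.infDist_nonneg
  have hγc : 0 < γ * c := mul_pos hγ hc
  -- W ∘ x is antitone on [0, ∞)
  have hWanti : AntitoneOn (fun s => W (x s)) (Set.Ici 0) := by
    apply antitoneOn_of_deriv_nonpos (convex_Ici 0)
    · exact fun s hs => (hd s hs).continuousAt.continuousWithinAt
    · intro s hs
      rw [interior_Ici] at hs
      exact ((hd s hs.le).differentiableAt.differentiableWithinAt)
    · intro s hs
      rw [interior_Ici] at hs
      rw [(hd s hs.le).deriv]
      have h1 := hineq s hs.le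
      nlinarith [hN1 (x s), hN2 (x s)]
  have hWinf_le : ∀ s, 0 ≤ s → Winf ≤ W (x s) := by
    intro s hs
    refine le_of_tendsto hWinf ?_
    filter_upwards [eventually_ge_atTop s] with u hu
    exact hWanti hs (hs.trans hu) hu
  have hA : 0 ≤ W (x 0) - Winf := by
    have := hWinf_le 0 le_rfl; linarith
  -- key antitone function on [t/2, t]
  have hg : AntitoneOn (fun s => W (x s) + γ * c * D ^ 2 * s) (Set.Icc (t/2) t) := by
    apply antitoneOn_of_deriv_nonpos (convex_Icc _ _)
    · intro s hs
      have hs0 : 0 ≤ s := le_trans hhalf0 hs.1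
      exact ((hd s hs0).add ((hasDerivAt_id s).const_mul (γ * c * D ^ 2))).continuousAt.continuousWithinAt
    · intro s hs
      rw [interior_Icc] at hs
      have hs0 : 0 ≤ s := le_trans hhalf0 hs.1.le
      exact ((hd s hs0).add ((hasDerivAt_id s).const_mul (γ * c * D ^ 2))).differentiableAt.differentiableWithinAt
    · intro s hs
      rw [interior_Icc] at hs
      have hs0 : 0 ≤ s := le_trans hhalf0 hs.1.le
      have hder := ((hd s hs0).add ((hasDerivAt_id s).const_mul (γ * c * D ^ 2))).deriv
      simp only [id_eq, mul_one] at hder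
      have hder' : deriv (fun s => W (x s) + γ * c * D ^ 2 * s) s = w' s + γ * c * D ^ 2 := hder
      rw [hder']
      have h1 := hineq s hs0
      have h2 := heb s (le_trans hhalfTU hs.1.le)
      have h3 : D ≤ Metric.infDist (x s) E := hmono s t (le_trans hhalft1 hs.1.le) hs.2.le
      have h4 : D ^ 2 ≤ Metric.infDist (x s) E ^ 2 := by nlinarith
      nlinarith
  have hmemL : t / 2 ∈ Set.Icc (t/2) t := ⟨le_rfl, hhalft⟩
  have hmemR : t ∈ Set.Icc (t/2) t := ⟨hhalft, le_rfl⟩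
  have hkey := hg hmemL hmemR hhalft
  simp only at hkey
  have hW2 : W (x (t/2)) ≤ W (x 0) := hWanti (le_refl (0:ℝ)) hhalf0 hhalf0
  have hWt : Winf ≤ W (x t) := hWinf_le t htpos.le
  have hmain : γ * c * D ^ 2 * (t / 2) ≤ W (x 0) - Winf := by nlinarith
  have h2 : D ^ 2 * t / 2 ≤ (W (x 0) - Winf) / (γ * c) := by
    rw [div_le_div_iff₀ (by norm_num) hγc]
    nlinarith
  have hD2 : D ^ 2 ≤ 2 * ((W (x 0) - Winf) / (γ * c)) / t := by
    rw [le_div_iff₀ htpos]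
    linarith
  have hrhs : Real.sqrt 2 * K / Real.sqrt t
      = Real.sqrt (2 * ((W (x 0) - Winf) / (γ * c)) / t) := by
    rw [hK, ← Real.sqrt_mul (by norm_num : (0:ℝ) ≤ 2),
      Real.sqrt_div (by positivity)]
  rw [hrhs]
  calc D = Real.sqrt (D ^ 2) := by rw [Real.sqrt_sq hD0]
    _ ≤ _ := Real.sqrt_le_sqrt hD2
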